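/- arXiv:2001.10406 — 2 statements merged into one kernel-verified Lean document; each statement's English description precedes it below -/
import Mathlib

section
/- Let U : 𝒫₂(ℝ^d) → ℝ be continuously L-differentiable (L-C¹) and let φ : ℝ^d → ℝ^d be of class C¹ with bounded derivative. Define V(m) := U(φ♯m) for m ∈ 𝒫₂(ℝ^d). Then V is L-C¹ and D_m V(m,y) = (Dφ(y))ᵀ · D_m U(φ♯m, φ(y)) for all (m,y) ∈ 𝒫₂(ℝ^d)×ℝ^d. -/
open MeasureTheory Set

noncomputable section

/-- Euclidean space `ℝ^d`. -/
abbrev Ed (d : ℕ) : Type := EuclideanSpace ℝ (Fin d)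

/-- `m ∈ 𝒫₂(ℝ^d)`: Borel probability measure with finite second moment. -/
def IsP2 {d : ℕ} (μ : Measure (Ed d)) : Prop :=
  IsProbabilityMeasure μ ∧ Integrable (fun x => ‖x‖ ^ 2) μ

/-- `π` is a coupling of `μ` and `ν`. -/
def IsCoupling {d : ℕ} (π : Measure (Ed d × Ed d)) (μ ν : Measure (Ed d)) : Prop :=
  π.map Prod.fst = μ ∧ π.map Prod.snd = ν

/-- The Wasserstein distance `d₂`. -/
noncomputable def W2 {d : ℕ} (μ ν : Measure (Ed d)) : ℝ :=
  sInf { r : ℝ | ∃ π : Measure (Ed d × Ed d), IsProbabilityMeasure π ∧ IsCoupling π μ ν ∧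
    r = (∫ p, ‖p.1 - p.2‖ ^ 2 ∂π) ^ (1 / 2 : ℝ) }

/-- The convex combination `(1-s) μ + s ν` of measures. -/
noncomputable def mixM {d : ℕ} (s : ℝ) (μ ν : Measure (Ed d)) : Measure (Ed d) :=
  ENNReal.ofReal (1 - s) • μ + ENNReal.ofReal s • ν

/-- `U : 𝒫₂(ℝ^d) → ℝ` is continuously `L`-differentiable (`L-C¹`) with flat derivative `F`:
`U` is continuous, `F` is a continuous bounded flat derivative of `U` (normalized so that
`∫ F(m,y) m(dy) = 0`), `y ↦ F(m,y)` is everywhere differentiable, and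
`D_m U = D_y F` is continuous and bounded on `𝒫₂ × ℝ^d`. -/
def IsLC1 {d : ℕ} (U : Measure (Ed d) → ℝ) (F : Measure (Ed d) → Ed d → ℝ) : Prop :=
  -- `U` continuous w.r.t. `d₂`
  (∀ m, IsP2 m → ∀ ε > (0 : ℝ), ∃ δ > (0 : ℝ), ∀ m', IsP2 m' →
    W2 m m' < δ → |U m' - U m| < ε) ∧
  -- fundamental identity for the flat derivative
  (∀ m m', IsP2 m → IsP2 m' →
    U m' - U m =
      ∫ s in (0 : ℝ)..1,
        ((∫ y, F (mixM s m m') y ∂m') - ∫ y, F (mixM s m m') y ∂m)) ∧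
  -- normalization
  (∀ m, IsP2 m → (∫ y, F m y ∂m) = 0) ∧
  -- `F` bounded and continuous
  (∃ B, ∀ m y, IsP2 m → |F m y| ≤ B) ∧
  (∀ m y, IsP2 m → ∀ ε > (0 : ℝ), ∃ δ > (0 : ℝ), ∀ m' y', IsP2 m' →
    W2 m m' < δ → ‖y' - y‖ < δ → |F m' y' - F m y| < ε) ∧
  -- `y ↦ F(m,y)` everywhere differentiable with `D_m U := D_y F` bounded and continuous
  (∀ m, IsP2 m → Differentiable ℝ (F m)) ∧
  (∃ B, ∀ m y, IsP2 m → ‖fderiv ℝ (F m) y‖ ≤ B) ∧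
  (∀ m y, IsP2 m → ∀ ε > (0 : ℝ), ∃ δ > (0 : ℝ), ∀ m' y', IsP2 m' →
    W2 m m' < δ → ‖y' - y‖ < δ → ‖fderiv ℝ (F m') y' - fderiv ℝ (F m) y‖ < ε)

namespace Stmt13Aux

variable {d : ℕ}

lemma integrable_norm_of_isP2 {m : Measure (Ed d)} (hm : IsP2 m) :
    Integrable (fun x : Ed d => ‖x‖) m := by
  haveI : IsProbabilityMeasure m := hm.1
  refine Integrable.mono (g := fun x : Ed d => ‖x‖ ^ 2 + 1)
    (hm.2.add (integrable_const 1)) continuous_norm.aestronglyMeasurable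
    (Filter.Eventually.of_forall fun x => ?_)
  have h0 : (0:ℝ) ≤ ‖x‖ := norm_nonneg x
  simp only [Real.norm_eq_abs, Pi.add_apply]
  rw [abs_of_nonneg (by positivity), abs_of_nonneg (by positivity)]
  nlinarith

lemma isP2_map {φ : Ed d → Ed d} (hc : Continuous φ) {L : ℝ} (hL0 : 0 ≤ L)
    (hlip : ∀ x y : Ed d, ‖φ x - φ y‖ ≤ L * ‖x - y‖)
    {m : Measure (Ed d)} (hm : IsP2 m) : IsP2 (Measure.map φ m) := by
  haveI : IsProbabilityMeasure m := hm.1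
  constructor
  · exact Measure.isProbabilityMeasure_map hc.measurable.aemeasurable
  · rw [integrable_map_measure (g := fun x : Ed d => ‖x‖ ^ 2) (continuous_norm.pow 2).aestronglyMeasurable
      hc.measurable.aemeasurable]
    set c : ℝ := ‖φ 0‖ with hcdef
    have hc0 : 0 ≤ c := norm_nonneg _
    have hg : Integrable (fun x : Ed d => c ^ 2 + 2 * c * L * ‖x‖ + L ^ 2 * ‖x‖ ^ 2) m := by
      exact ((integrable_const _).add ((integrable_norm_of_isP2 hm).const_mul _)).add
        (hm.2.const_mul _)
    refine hg.mono ((continuous_norm.comp hc).pow 2).aestronglyMeasurable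
      (Filter.Eventually.of_forall fun x => ?_)
    have h1 : ‖φ x‖ ≤ c + L * ‖x‖ := by
      have ha := hlip x 0
      have h2 := norm_sub_norm_le (φ x) (φ 0)
      simp only [sub_zero] at ha
      linarith
    have hx0 : (0:ℝ) ≤ ‖x‖ := norm_nonneg x
    have hφx0 : (0:ℝ) ≤ ‖φ x‖ := norm_nonneg _
    simp only [Real.norm_eq_abs, Function.comp]
    rw [abs_of_nonneg (by positivity), abs_of_nonneg (by positivity)]
    nlinarith [mul_nonneg hL0 hx0]

lemma W2_set_bddBelow (μ ν : Measure (Ed d)) :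
    BddBelow { r : ℝ | ∃ π : Measure (Ed d × Ed d), IsProbabilityMeasure π ∧ IsCoupling π μ ν ∧
      r = (∫ p, ‖p.1 - p.2‖ ^ 2 ∂π) ^ (1 / 2 : ℝ) } := by
  refine ⟨0, fun r hr => ?_⟩
  obtain ⟨π, _, _, rfl⟩ := hr
  exact Real.rpow_nonneg (integral_nonneg fun p => by positivity) _

lemma coupling_integrable {μ ν : Measure (Ed d)} (hμ : IsP2 μ) (hν : IsP2 ν)
    {π : Measure (Ed d × Ed d)} (hπ : IsCoupling π μ ν) :
    Integrable (fun p : Ed d × Ed d => ‖p.1 - p.2‖ ^ 2) π := by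
  have h1 : Integrable (fun p : Ed d × Ed d => ‖p.1‖ ^ 2) π := by
    have h := hμ.2
    rw [← hπ.1, integrable_map_measure (g := fun x : Ed d => ‖x‖ ^ 2) (continuous_norm.pow 2).aestronglyMeasurable
      measurable_fst.aemeasurable] at h
    exact h
  have h2 : Integrable (fun p : Ed d × Ed d => ‖p.2‖ ^ 2) π := by
    have h := hν.2
    rw [← hπ.2, integrable_map_measure (g := fun x : Ed d => ‖x‖ ^ 2) (continuous_norm.pow 2).aestronglyMeasurable
      measurable_snd.aemeasurable] at h
    exact h
  refine ((h1.const_mul 2).add (h2.const_mul 2)).mono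
    (((continuous_fst.sub continuous_snd).norm.pow 2)).aestronglyMeasurable
    (Filter.Eventually.of_forall fun p => ?_)
  simp only [Real.norm_eq_abs, Pi.add_apply]
  rw [abs_of_nonneg (by positivity), abs_of_nonneg (by positivity)]
  nlinarith [norm_sub_le p.1 p.2, norm_nonneg p.1, norm_nonneg p.2,
    sq_nonneg (‖p.1‖ - ‖p.2‖), norm_nonneg (p.1 - p.2)]

lemma W2_map_le {φ : Ed d → Ed d} (hc : Continuous φ) {L : ℝ} (hL0 : 0 ≤ L)
    (hlip : ∀ x y : Ed d, ‖φ x - φ y‖ ≤ L * ‖x - y‖)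
    {μ ν : Measure (Ed d)} (hμ : IsP2 μ) (hν : IsP2 ν) {r : ℝ}
    (h : W2 μ ν < r) : W2 (Measure.map φ μ) (Measure.map φ ν) ≤ L * r := by
  haveI := hμ.1; haveI := hν.1
  have hne : Set.Nonempty { r : ℝ | ∃ π : Measure (Ed d × Ed d),
      IsProbabilityMeasure π ∧ IsCoupling π μ ν ∧
      r = (∫ p, ‖p.1 - p.2‖ ^ 2 ∂π) ^ (1 / 2 : ℝ) } := by
    refine ⟨_, μ.prod ν, inferInstance, ⟨?_, ?_⟩, rfl⟩
    · simp [Measure.map_fst_prod]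
    · simp [Measure.map_snd_prod]
  obtain ⟨r₀, hr₀mem, hr₀lt⟩ := (csInf_lt_iff (W2_set_bddBelow μ ν) hne).mp h
  obtain ⟨π, hπp, hπc, rfl⟩ := hr₀mem
  haveI := hπp
  set c : ℝ := ∫ p, ‖p.1 - p.2‖ ^ 2 ∂π with hcdef
  have hc0 : 0 ≤ c := integral_nonneg fun p => by positivity
  have hcost := coupling_integrable hμ hν hπc
  have hmeas2 : Measurable (Prod.map φ φ) :=
    (hc.prodMap hc).measurable
  haveI : IsProbabilityMeasure (π.map (Prod.map φ φ)) :=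
    Measure.isProbabilityMeasure_map hmeas2.aemeasurable
  have hcoup : IsCoupling (π.map (Prod.map φ φ)) (μ.map φ) (ν.map φ) := by
    constructor
    · rw [Measure.map_map measurable_fst hmeas2,
        show (Prod.fst ∘ Prod.map φ φ : Ed d × Ed d → Ed d) = φ ∘ Prod.fst from rfl,
        ← Measure.map_map hc.measurable measurable_fst, hπc.1]
    · rw [Measure.map_map measurable_snd hmeas2,
        show (Prod.snd ∘ Prod.map φ φ : Ed d × Ed d → Ed d) = φ ∘ Prod.snd from rfl,
        ← Measure.map_map hc.measurable measurable_snd, hπc.2]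
  have hι : Integrable (fun p : Ed d × Ed d => ‖φ p.1 - φ p.2‖ ^ 2) π := by
    refine (hcost.const_mul (L ^ 2)).mono
      (((hc.comp continuous_fst).sub (hc.comp continuous_snd)).norm.pow 2).aestronglyMeasurable
      (Filter.Eventually.of_forall fun p => ?_)
    simp only [Real.norm_eq_abs, Pi.add_apply]
    rw [abs_of_nonneg (by positivity), abs_of_nonneg (by positivity)]
    nlinarith [hlip p.1 p.2, norm_nonneg (p.1 - p.2), norm_nonneg (φ p.1 - φ p.2),
      mul_nonneg hL0 (norm_nonneg (p.1 - p.2))]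
  have hval : (∫ p, ‖p.1 - p.2‖ ^ 2 ∂(π.map (Prod.map φ φ)))
      = ∫ p, ‖φ p.1 - φ p.2‖ ^ 2 ∂π := by
    rw [integral_map hmeas2.aemeasurable (f := fun p : Ed d × Ed d => ‖p.1 - p.2‖ ^ 2)
      ((continuous_fst.sub continuous_snd).norm.pow 2).aestronglyMeasurable]
    rfl
  have hle : (∫ p, ‖p.1 - p.2‖ ^ 2 ∂(π.map (Prod.map φ φ))) ≤ L ^ 2 * c := by
    rw [hval]
    calc (∫ p, ‖φ p.1 - φ p.2‖ ^ 2 ∂π) ≤ ∫ p, L ^ 2 * ‖p.1 - p.2‖ ^ 2 ∂π := by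
          refine integral_mono hι (hcost.const_mul _) fun p => ?_
          nlinarith [hlip p.1 p.2, norm_nonneg (p.1 - p.2), norm_nonneg (φ p.1 - φ p.2),
            mul_nonneg hL0 (norm_nonneg (p.1 - p.2))]
      _ = L ^ 2 * c := by rw [integral_const_mul]
  have hW2le : W2 (Measure.map φ μ) (Measure.map φ ν)
      ≤ (∫ p, ‖p.1 - p.2‖ ^ 2 ∂(π.map (Prod.map φ φ))) ^ (1 / 2 : ℝ) :=
    csInf_le (W2_set_bddBelow _ _) ⟨π.map (Prod.map φ φ), inferInstance, hcoup, rfl⟩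
  refine hW2le.trans ?_
  have hint0 : (0:ℝ) ≤ ∫ p, ‖p.1 - p.2‖ ^ 2 ∂(π.map (Prod.map φ φ)) :=
    integral_nonneg fun p => by positivity
  rw [← Real.sqrt_eq_rpow]
  calc Real.sqrt (∫ p, ‖p.1 - p.2‖ ^ 2 ∂(π.map (Prod.map φ φ)))
      ≤ Real.sqrt (L ^ 2 * c) := Real.sqrt_le_sqrt hle
    _ = L * Real.sqrt c := by rw [Real.sqrt_mul (sq_nonneg L), Real.sqrt_sq hL0]
    _ ≤ L * r := by
        refine mul_le_mul_of_nonneg_left ?_ hL0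
        rw [Real.sqrt_eq_rpow]
        exact hr₀lt.le
  
lemma isP2_mix {μ ν : Measure (Ed d)} (hμ : IsP2 μ) (hν : IsP2 ν) {s : ℝ}
    (h0 : 0 ≤ s) (h1 : s ≤ 1) : IsP2 (mixM s μ ν) := by
  haveI := hμ.1; haveI := hν.1
  constructor
  · constructor
    rw [mixM]
    simp only [Measure.coe_add, Pi.add_apply, Measure.smul_apply, smul_eq_mul,
      measure_univ, mul_one]
    rw [← ENNReal.ofReal_add (by linarith) h0]
    norm_num
  · rw [mixM]
    exact (hμ.2.smul_measure ENNReal.ofReal_ne_top).add_measure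
      (hν.2.smul_measure ENNReal.ofReal_ne_top)

lemma map_mix {φ : Ed d → Ed d} (hφm : Measurable φ) (s : ℝ) (μ ν : Measure (Ed d)) :
    Measure.map φ (mixM s μ ν) = mixM s (Measure.map φ μ) (Measure.map φ ν) := by
  simp [mixM, Measure.map_add _ _ hφm, Measure.map_smul]

lemma aux_lt {L δ : ℝ} (hL : 0 ≤ L) (hδ : 0 < δ) : L * (δ / (L + 1)) < δ := by
  have hpos : (0:ℝ) < L + 1 := by linarith
  rw [← mul_div_assoc, div_lt_iff₀ hpos]
  nlinarith

end Stmt13Aux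

/-- if `U` is `L-C¹` and `φ ∈ C¹` with bounded derivative, then
`V(m) := U(φ♯m)` is `L-C¹` with `D_m V(m,y) = (Dφ(y))ᵀ D_m U(φ♯m, φ(y))`
(stated as the equality of derivatives `D(δV/δm)(m,·)(y) = D(δU/δm)(φ♯m,·)(φ(y)) ∘ Dφ(y)`). -/
theorem stmt_13 (d : ℕ) (hd : 1 ≤ d)
    (U : Measure (Ed d) → ℝ) (F : Measure (Ed d) → Ed d → ℝ) (φ : Ed d → Ed d)
    (hφ : ContDiff ℝ 1 φ) (hφb : ∃ B, ∀ y, ‖fderiv ℝ φ y‖ ≤ B)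
    (hU : IsLC1 U F) :
    ∃ G : Measure (Ed d) → Ed d → ℝ,
      IsLC1 (fun m => U (Measure.map φ m)) G ∧
      ∀ m y, IsP2 m →
        fderiv ℝ (G m) y =
          (fderiv ℝ (F (Measure.map φ m)) (φ y)).comp (fderiv ℝ φ y) := by
  open Stmt13Aux in
  obtain ⟨hUc, hUid, hUn, ⟨BF, hBF⟩, hFc, hFd, ⟨BD, hBD⟩, hDc⟩ := hU
  obtain ⟨B0, hB0⟩ := hφb
  set L : ℝ := max B0 0 with hLdef
  have hL0 : 0 ≤ L := le_max_right _ _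
  have hLd : ∀ y, ‖fderiv ℝ φ y‖ ≤ L := fun y => (hB0 y).trans (le_max_left _ _)
  have hφd : Differentiable ℝ φ := hφ.differentiable one_ne_zero
  have hφc : Continuous φ := hφ.continuous
  have hlip : ∀ x y : Ed d, ‖φ x - φ y‖ ≤ L * ‖x - y‖ := by
    intro x y
    have := Convex.norm_image_sub_le_of_norm_fderiv_le (f := φ) (s := Set.univ)
      (fun z _ => hφd z) (fun z _ => hLd z) convex_univ
      (Set.mem_univ y) (Set.mem_univ x)
    simpa using this
  have hmapP2 : ∀ {m : Measure (Ed d)}, IsP2 m → IsP2 (Measure.map φ m) :=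
    fun hm => Stmt13Aux.isP2_map hφc hL0 hlip hm
  have hW2 : ∀ {m m' : Measure (Ed d)} {δ : ℝ}, IsP2 m → IsP2 m' → 0 < δ →
      W2 m m' < δ / (L + 1) → W2 (Measure.map φ m) (Measure.map φ m') < δ := by
    intro m m' δ hm hm' hδ hW
    exact lt_of_le_of_lt (Stmt13Aux.W2_map_le hφc hL0 hlip hm hm' hW)
      (Stmt13Aux.aux_lt hL0 hδ)
  have hφy : ∀ {y y' : Ed d} {δ : ℝ}, 0 < δ → ‖y' - y‖ < δ / (L + 1) →
      ‖φ y' - φ y‖ < δ := by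
    intro y y' δ hδ hy
    calc ‖φ y' - φ y‖ ≤ L * ‖y' - y‖ := hlip y' y
      _ ≤ L * (δ / (L + 1)) := mul_le_mul_of_nonneg_left hy.le hL0
      _ < δ := Stmt13Aux.aux_lt hL0 hδ
  have hchain : ∀ (m : Measure (Ed d)) (y : Ed d), IsP2 m →
      fderiv ℝ (fun y => F (Measure.map φ m) (φ y)) y =
        (fderiv ℝ (F (Measure.map φ m)) (φ y)).comp (fderiv ℝ φ y) := by
    intro m y hm
    exact fderiv_comp y ((hFd _ (hmapP2 hm)) (φ y)) (hφd y)
  refine ⟨fun m y => F (Measure.map φ m) (φ y), ⟨?_, ?_, ?_, ?_, ?_, ?_, ?_, ?_⟩,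
    fun m y hm => hchain m y hm⟩
  -- continuity of V
  · intro m hm ε hε
    obtain ⟨δ₁, hδ₁, h1⟩ := hUc _ (hmapP2 hm) ε hε
    refine ⟨δ₁ / (L + 1), by positivity, fun m' hm' hW => ?_⟩
    exact h1 _ (hmapP2 hm') (hW2 hm hm' hδ₁ hW)
  -- fundamental identity
  · intro m m' hm hm'
    have hid := hUid _ _ (hmapP2 hm) (hmapP2 hm')
    beta_reduce
    rw [hid]
    refine intervalIntegral.integral_congr fun s hs => ?_
    rw [Set.uIcc_of_le (zero_le_one (α := ℝ))] at hs
    have hP2mix : IsP2 (mixM s (Measure.map φ m) (Measure.map φ m')) :=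
      Stmt13Aux.isP2_mix (hmapP2 hm) (hmapP2 hm') hs.1 hs.2
    have hcont : Continuous (F (mixM s (Measure.map φ m) (Measure.map φ m'))) :=
      (hFd _ hP2mix).continuous
    beta_reduce
    rw [Stmt13Aux.map_mix hφc.measurable]
    rw [integral_map hφc.measurable.aemeasurable hcont.aestronglyMeasurable,
      integral_map hφc.measurable.aemeasurable hcont.aestronglyMeasurable]
  -- normalization
  · intro m hm
    have hcont : Continuous (F (Measure.map φ m)) := (hFd _ (hmapP2 hm)).continuous
    rw [← integral_map hφc.measurable.aemeasurable hcont.aestronglyMeasurable]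
    exact hUn _ (hmapP2 hm)
  -- boundedness of G
  · exact ⟨BF, fun m y hm => hBF _ _ (hmapP2 hm)⟩
  -- continuity of G
  · intro m y hm ε hε
    obtain ⟨δ₁, hδ₁, h1⟩ := hFc _ (φ y) (hmapP2 hm) ε hε
    refine ⟨δ₁ / (L + 1), by positivity, fun m' y' hm' hW hy => ?_⟩
    exact h1 _ _ (hmapP2 hm') (hW2 hm hm' hδ₁ hW) (hφy hδ₁ hy)
  -- differentiability of G m
  · intro m hm
    exact (hFd _ (hmapP2 hm)).comp hφd
  -- boundedness of the derivative
  · refine ⟨max BD 0 * L, fun m y hm => ?_⟩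
    rw [hchain m y hm]
    calc ‖(fderiv ℝ (F (Measure.map φ m)) (φ y)).comp (fderiv ℝ φ y)‖
        ≤ ‖fderiv ℝ (F (Measure.map φ m)) (φ y)‖ * ‖fderiv ℝ φ y‖ :=
          ContinuousLinearMap.opNorm_comp_le _ _
      _ ≤ max BD 0 * L := by
          refine mul_le_mul ((hBD _ _ (hmapP2 hm)).trans (le_max_left _ _)) (hLd y)
            (norm_nonneg _) (le_max_right _ _)
  -- continuity of the derivative
  · intro m y hm ε hε
    set BD' : ℝ := max BD 0 with hBD'def
    have hBD'0 : 0 ≤ BD' := le_max_right _ _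
    obtain ⟨δ₁, hδ₁, h1⟩ := hDc _ (φ y) (hmapP2 hm) (ε / (2 * (L + 1)))
      (by positivity)
    have hcφ : Continuous (fderiv ℝ φ) := hφ.continuous_fderiv one_ne_zero
    obtain ⟨δ₂, hδ₂, h2⟩ := Metric.continuousAt_iff.mp (hcφ.continuousAt (x := y))
      (ε / (2 * (BD' + 1))) (by positivity)
    refine ⟨min (δ₁ / (L + 1)) δ₂, by positivity, fun m' y' hm' hW hy => ?_⟩
    rw [hchain m y hm, hchain m' y' hm']
    set A := fderiv ℝ (F (Measure.map φ m)) (φ y) with hA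
    set A' := fderiv ℝ (F (Measure.map φ m')) (φ y') with hA'
    set P := fderiv ℝ φ y with hP
    set P' := fderiv ℝ φ y' with hP'
    have hAbd : ‖A‖ ≤ BD' := (hBD _ _ (hmapP2 hm)).trans (le_max_left _ _)
    have hP'bd : ‖P'‖ ≤ L := hLd y'
    have hAA : ‖A' - A‖ < ε / (2 * (L + 1)) := by
      refine h1 _ _ (hmapP2 hm') ?_ ?_
      · exact hW2 hm hm' hδ₁ (lt_of_lt_of_le hW (min_le_left _ _))
      · exact hφy hδ₁ (lt_of_lt_of_le hy (min_le_left _ _))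
    have hPP : ‖P' - P‖ < ε / (2 * (BD' + 1)) := by
      have := h2 (show dist y' y < δ₂ by
        rw [dist_eq_norm]; exact lt_of_lt_of_le hy (min_le_right _ _))
      rwa [dist_eq_norm] at this
    have hkey : A'.comp P' - A.comp P = (A' - A).comp P' + A.comp (P' - P) := by
      rw [ContinuousLinearMap.sub_comp, ContinuousLinearMap.comp_sub]
      abel
    have hb1 : ε / (2 * (L + 1)) * (L + 1) = ε / 2 := by
      field_simp
    have hb2 : ε / (2 * (BD' + 1)) * (BD' + 1) = ε / 2 := by
      field_simp
    calc ‖A'.comp P' - A.comp P‖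
        = ‖(A' - A).comp P' + A.comp (P' - P)‖ := by rw [hkey]
      _ ≤ ‖(A' - A).comp P'‖ + ‖A.comp (P' - P)‖ := norm_add_le _ _
      _ ≤ ‖A' - A‖ * ‖P'‖ + ‖A‖ * ‖P' - P‖ :=
          add_le_add (ContinuousLinearMap.opNorm_comp_le _ _)
            (ContinuousLinearMap.opNorm_comp_le _ _)
      _ < ε := by
          have t1 : ‖A' - A‖ * ‖P'‖ ≤ ε / (2 * (L + 1)) * L :=
            mul_le_mul hAA.le hP'bd (norm_nonneg _) (by positivity)
          have t1' : ε / (2 * (L + 1)) * L < ε / 2 := by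
            have : ε / (2 * (L + 1)) * L < ε / (2 * (L + 1)) * (L + 1) := by
              refine mul_lt_mul_of_pos_left (lt_add_one L) (by positivity)
            linarith [hb1 ▸ this]
          have t2 : ‖A‖ * ‖P' - P‖ ≤ BD' * ‖P' - P‖ :=
            mul_le_mul_of_nonneg_right hAbd (norm_nonneg _)
          have t2' : BD' * ‖P' - P‖ < ε / 2 := by
            have h3 : BD' * ‖P' - P‖ ≤ BD' * (ε / (2 * (BD' + 1))) :=
              mul_le_mul_of_nonneg_left hPP.le hBD'0
            have h4 : BD' * (ε / (2 * (BD' + 1))) < (BD' + 1) * (ε / (2 * (BD' + 1))) :=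
              mul_lt_mul_of_pos_right (lt_add_one BD') (by positivity)
            have h5 : (BD' + 1) * (ε / (2 * (BD' + 1))) = ε / 2 := by
              rw [mul_comm]; exact hb2
            linarith
          linarith


end
end

section
/- Let U : 𝒫₂(ℝ^d) → ℝ be continuously L-differentiable (L-C¹) and define V(x,m) := U((id+x)♯m) for x ∈ ℝ^d and m ∈ 𝒫₂(ℝ^d), where id+x denotes the translation z ↦ z+x. Then for each m the map x ↦ V(x,m) is of class C¹ and D_x V(x,m) = ∫_{ℝ^d} D_m U((id+x)♯m, x+y) m(dy). -/
open MeasureTheory Set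

noncomputable section

-- helpers
variable {d : ℕ}

lemma W2_le_of_coupling {μ ν : Measure (Ed d)} (π : Measure (Ed d × Ed d))
    (hπ : IsProbabilityMeasure π) (hc : IsCoupling π μ ν) {C : ℝ} (hC : 0 ≤ C)
    (h : (∫ p, ‖p.1 - p.2‖ ^ 2 ∂π) ≤ C ^ 2) : W2 μ ν ≤ C := by
  have hmem : ((∫ p, ‖p.1 - p.2‖ ^ 2 ∂π) ^ (1 / 2 : ℝ)) ∈
      { r : ℝ | ∃ π : Measure (Ed d × Ed d), IsProbabilityMeasure π ∧ IsCoupling π μ ν ∧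
        r = (∫ p, ‖p.1 - p.2‖ ^ 2 ∂π) ^ (1 / 2 : ℝ) } := ⟨π, hπ, hc, rfl⟩
  have hbdd : BddBelow { r : ℝ | ∃ π : Measure (Ed d × Ed d), IsProbabilityMeasure π ∧
      IsCoupling π μ ν ∧ r = (∫ p, ‖p.1 - p.2‖ ^ 2 ∂π) ^ (1 / 2 : ℝ) } := by
    refine ⟨0, fun r hr => ?_⟩
    obtain ⟨π', -, -, rfl⟩ := hr
    exact Real.rpow_nonneg (integral_nonneg fun p => by positivity) _
  have h0 : (0:ℝ) ≤ ∫ p, ‖p.1 - p.2‖ ^ 2 ∂π := integral_nonneg fun p => by positivity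
  have : ((∫ p, ‖p.1 - p.2‖ ^ 2 ∂π) ^ (1 / 2 : ℝ)) ≤ C := by
    calc ((∫ p, ‖p.1 - p.2‖ ^ 2 ∂π) ^ (1 / 2 : ℝ)) ≤ (C ^ 2) ^ (1 / 2 : ℝ) :=
          Real.rpow_le_rpow h0 h (by norm_num)
      _ = C := by
          rw [← Real.rpow_natCast C 2, ← Real.rpow_mul hC]
          norm_num
  exact le_trans (csInf_le hbdd hmem) this


lemma mixM_zero (μ ν : Measure (Ed d)) : mixM 0 μ ν = μ := by
  simp [mixM]

lemma mixM_one (μ ν : Measure (Ed d)) : mixM 1 μ ν = ν := by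
  simp [mixM]

lemma meas_trans (a : Ed d) : Measurable (fun z : Ed d => z + a) :=
  (continuous_id.add continuous_const).measurable

lemma isProb_map {μ : Measure (Ed d)} [IsProbabilityMeasure μ] (a : Ed d) :
    IsProbabilityMeasure (μ.map (fun z => z + a)) :=
  Measure.isProbabilityMeasure_map (meas_trans a).aemeasurable

lemma W2_mix_le {m : Measure (Ed d)} (hm : IsProbabilityMeasure m) (a b : Ed d)
    {s₁ s₂ : ℝ} (h0 : 0 ≤ s₁) (h12 : s₁ ≤ s₂) (h1 : s₂ ≤ 1) :
    W2 (mixM s₁ (m.map (fun z => z + a)) (m.map (fun z => z + b)))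
       (mixM s₂ (m.map (fun z => z + a)) (m.map (fun z => z + b)))
      ≤ Real.sqrt (s₂ - s₁) * ‖a - b‖ := by
  set da : Ed d → Ed d × Ed d := fun y => (y + a, y + a) with hda
  set db : Ed d → Ed d × Ed d := fun y => (y + b, y + b) with hdb
  set tab : Ed d → Ed d × Ed d := fun y => (y + a, y + b) with htab
  have mda : Measurable da := (meas_trans a).prodMk (meas_trans a)
  have mdb : Measurable db := (meas_trans b).prodMk (meas_trans b)
  have mtab : Measurable tab := (meas_trans a).prodMk (meas_trans b)
  set π : Measure (Ed d × Ed d) :=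
    ENNReal.ofReal (1 - s₂) • m.map da + ENNReal.ofReal s₁ • m.map db
      + ENNReal.ofReal (s₂ - s₁) • m.map tab with hπdef
  have huniv : ∀ (φ : Ed d → Ed d × Ed d), Measurable φ → m.map φ univ = 1 := by
    intro φ hφ
    rw [Measure.map_apply hφ MeasurableSet.univ]
    simp [measure_univ]
  have hπ : IsProbabilityMeasure π := by
    constructor
    rw [hπdef]
    simp only [Measure.add_apply, Measure.smul_apply, smul_eq_mul,
      huniv da mda, huniv db mdb, huniv tab mtab, mul_one]
    rw [← ENNReal.ofReal_add (by linarith) (by linarith),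
      ← ENNReal.ofReal_add (by linarith) (by linarith)]
    norm_num
  have hfst : π.map Prod.fst = mixM s₁ (m.map (fun z => z + a)) (m.map (fun z => z + b)) := by
    rw [hπdef, Measure.map_add _ _ measurable_fst, Measure.map_add _ _ measurable_fst,
      Measure.map_smul, Measure.map_smul, Measure.map_smul,
      Measure.map_map measurable_fst mda, Measure.map_map measurable_fst mdb,
      Measure.map_map measurable_fst mtab]
    have e1 : (Prod.fst ∘ da) = fun z : Ed d => z + a := rfl
    have e2 : (Prod.fst ∘ db) = fun z : Ed d => z + b := rfl
    have e3 : (Prod.fst ∘ tab) = fun z : Ed d => z + a := rfl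
    rw [e1, e2, e3]
    have : ENNReal.ofReal (1 - s₁) = ENNReal.ofReal (1 - s₂) + ENNReal.ofReal (s₂ - s₁) := by
      rw [← ENNReal.ofReal_add (by linarith) (by linarith)]; ring_nf
    rw [mixM, this, add_smul]
    abel
  have hsnd : π.map Prod.snd = mixM s₂ (m.map (fun z => z + a)) (m.map (fun z => z + b)) := by
    rw [hπdef, Measure.map_add _ _ measurable_snd, Measure.map_add _ _ measurable_snd,
      Measure.map_smul, Measure.map_smul, Measure.map_smul,
      Measure.map_map measurable_snd mda, Measure.map_map measurable_snd mdb,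
      Measure.map_map measurable_snd mtab]
    have e1 : (Prod.snd ∘ da) = fun z : Ed d => z + a := rfl
    have e2 : (Prod.snd ∘ db) = fun z : Ed d => z + b := rfl
    have e3 : (Prod.snd ∘ tab) = fun z : Ed d => z + b := rfl
    rw [e1, e2, e3]
    have : ENNReal.ofReal s₂ = ENNReal.ofReal s₁ + ENNReal.ofReal (s₂ - s₁) := by
      rw [← ENNReal.ofReal_add (by linarith) (by linarith)]; ring_nf
    rw [mixM, this, add_smul]
    abel
  refine W2_le_of_coupling π hπ ⟨hfst, hsnd⟩ (mul_nonneg (Real.sqrt_nonneg _) (norm_nonneg _)) ?_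
  set f : Ed d × Ed d → ℝ := fun p => ‖p.1 - p.2‖ ^ 2 with hf
  have hfc : Continuous f := by
    apply Continuous.pow
    exact (continuous_fst.sub continuous_snd).norm
  have hint : ∀ (φ : Ed d → Ed d × Ed d), Measurable φ → (Integrable f (m.map φ)
      ↔ Integrable (f ∘ φ) m) := fun φ hφ =>
    integrable_map_measure hfc.aestronglyMeasurable hφ.aemeasurable
  have hda0 : (f ∘ da) = fun _ : Ed d => (0:ℝ) := by funext y; simp [hf, hda]
  have hdb0 : (f ∘ db) = fun _ : Ed d => (0:ℝ) := by funext y; simp [hf, hdb]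
  have htabc : (f ∘ tab) = fun _ : Ed d => ‖a - b‖ ^ 2 := by
    funext y
    have : (y + a) - (y + b) = a - b := by abel
    simp only [hf, htab, Function.comp_apply, this]
  have i1 : Integrable f (m.map da) := (hint da mda).mpr (by rw [hda0]; exact integrable_const _)
  have i2 : Integrable f (m.map db) := (hint db mdb).mpr (by rw [hdb0]; exact integrable_const _)
  have i3 : Integrable f (m.map tab) :=
    (hint tab mtab).mpr (by rw [htabc]; exact integrable_const _)
  have e1 : ∫ p, f p ∂(m.map da) = 0 := by
    rw [integral_map mda.aemeasurable hfc.aestronglyMeasurable]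
    simp only [← Function.comp_apply (f := f) (g := da)]
    rw [hda0]; simp
  have e2 : ∫ p, f p ∂(m.map db) = 0 := by
    rw [integral_map mdb.aemeasurable hfc.aestronglyMeasurable]
    simp only [← Function.comp_apply (f := f) (g := db)]
    rw [hdb0]; simp
  have e3 : ∫ p, f p ∂(m.map tab) = ‖a - b‖ ^ 2 := by
    rw [integral_map mtab.aemeasurable hfc.aestronglyMeasurable]
    simp only [← Function.comp_apply (f := f) (g := tab)]
    rw [htabc]
    simp [measure_univ]
  have key : (∫ p, f p ∂π) = (s₂ - s₁) * ‖a - b‖ ^ 2 := by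
    rw [hπdef, integral_add_measure ((i1.smul_measure ENNReal.ofReal_ne_top).add_measure
        (i2.smul_measure ENNReal.ofReal_ne_top)) (i3.smul_measure ENNReal.ofReal_ne_top),
      integral_add_measure (i1.smul_measure ENNReal.ofReal_ne_top)
        (i2.smul_measure ENNReal.ofReal_ne_top),
      integral_smul_measure, integral_smul_measure, integral_smul_measure, e1, e2, e3]
    simp only [smul_eq_mul, mul_zero, zero_add]
    rw [ENNReal.toReal_ofReal (by linarith)]
  have hrc : (s₂ - s₁) * ‖a - b‖ ^ 2 = (Real.sqrt (s₂ - s₁) * ‖a - b‖) ^ 2 := by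
    rw [mul_pow, Real.sq_sqrt (by linarith)]
  rw [key, hrc]


lemma mixM_comm (s : ℝ) (μ ν : Measure (Ed d)) : mixM s μ ν = mixM (1 - s) ν μ := by
  simp only [mixM, sub_sub_cancel]
  exact add_comm _ _

lemma W2_mix_abs {m : Measure (Ed d)} (hm : IsProbabilityMeasure m) (a b : Ed d)
    {s s' : ℝ} (hs : s ∈ Icc (0:ℝ) 1) (hs' : s' ∈ Icc (0:ℝ) 1) :
    W2 (mixM s (m.map (fun z => z + a)) (m.map (fun z => z + b)))
       (mixM s' (m.map (fun z => z + a)) (m.map (fun z => z + b)))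
      ≤ Real.sqrt |s' - s| * ‖a - b‖ := by
  rcases le_total s s' with h | h
  · have := W2_mix_le hm a b hs.1 h hs'.2
    rwa [abs_of_nonneg (by linarith)]
  · rw [mixM_comm s, mixM_comm s']
    have := W2_mix_le hm b a (s₁ := 1 - s) (s₂ := 1 - s')
      (by linarith [hs.2]) (by linarith) (by linarith [hs'.1])
    have e : (1 - s') - (1 - s) = s - s' := by ring
    rw [e, norm_sub_rev] at this
    rwa [abs_of_nonpos (by linarith), neg_sub]

lemma W2_trans_le {m : Measure (Ed d)} (hm : IsProbabilityMeasure m) (a b : Ed d) :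
    W2 (m.map (fun z => z + a)) (m.map (fun z => z + b)) ≤ ‖a - b‖ := by
  have := W2_mix_le hm a b (le_refl (0:ℝ)) zero_le_one (le_refl (1:ℝ))
  simpa [mixM_zero, mixM_one] using this

lemma W2_trans_mix_le {m : Measure (Ed d)} (hm : IsProbabilityMeasure m) (a b : Ed d)
    {s : ℝ} (hs : s ∈ Icc (0:ℝ) 1) :
    W2 (m.map (fun z => z + a)) (mixM s (m.map (fun z => z + a)) (m.map (fun z => z + b)))
      ≤ ‖a - b‖ := by
  have h := W2_mix_le hm a b (le_refl (0:ℝ)) hs.1 hs.2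
  rw [mixM_zero] at h
  refine h.trans ?_
  have : Real.sqrt (s - 0) ≤ 1 := by
    rw [show (1:ℝ) = Real.sqrt 1 by simp]
    exact Real.sqrt_le_sqrt (by linarith [hs.2])
  calc Real.sqrt (s - 0) * ‖a - b‖ ≤ 1 * ‖a - b‖ :=
        mul_le_mul_of_nonneg_right this (norm_nonneg _)
    _ = ‖a - b‖ := one_mul _

lemma isP2_map {m : Measure (Ed d)} (hm : IsP2 m) (a : Ed d) :
    IsP2 (m.map (fun z => z + a)) := by
  have hprob : IsProbabilityMeasure m := hm.1
  refine ⟨isProb_map a, ?_⟩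
  have hn : Continuous (fun x : Ed d => ‖x‖ ^ 2) := (continuous_norm).pow 2
  rw [integrable_map_measure hn.aestronglyMeasurable (meas_trans a).aemeasurable]
  have hmono : ∀ y : Ed d, ‖‖y + a‖ ^ 2‖ ≤ 2 * ‖y‖ ^ 2 + 2 * ‖a‖ ^ 2 := by
    intro y
    have h1 : ‖y + a‖ ≤ ‖y‖ + ‖a‖ := norm_add_le y a
    have h2 : (0:ℝ) ≤ ‖y + a‖ := norm_nonneg _
    rw [Real.norm_eq_abs, abs_of_nonneg (by positivity)]
    nlinarith [norm_nonneg y, norm_nonneg a, sq_nonneg (‖y‖ - ‖a‖), sq_abs (‖y+a‖)]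
  exact ((hm.2.const_mul 2).add (integrable_const (2 * ‖a‖ ^ 2))).mono'
    ((hn.comp (continuous_id.add continuous_const)).aestronglyMeasurable) (ae_of_all _ hmono)

lemma isP2_mix {μ ν : Measure (Ed d)} (hμ : IsP2 μ) (hν : IsP2 ν) {s : ℝ}
    (hs : s ∈ Icc (0:ℝ) 1) : IsP2 (mixM s μ ν) := by
  have h1 : IsProbabilityMeasure μ := hμ.1
  have h2 : IsProbabilityMeasure ν := hν.1
  constructor
  · constructor
    simp only [mixM, Measure.add_apply, Measure.smul_apply, smul_eq_mul, measure_univ, mul_one]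
    rw [← ENNReal.ofReal_add (by linarith [hs.2]) hs.1]
    norm_num
  · exact (hμ.2.smul_measure ENNReal.ofReal_ne_top).add_measure
      (hν.2.smul_measure ENNReal.ofReal_ne_top)

lemma integrable_bdd {α G : Type*} [MeasurableSpace α] [NormedAddCommGroup G]
    {μ : Measure α} [IsProbabilityMeasure μ] {f : α → G}
    (hf : AEStronglyMeasurable f μ) {B : ℝ} (hB : ∀ y, ‖f y‖ ≤ B) : Integrable f μ :=
  (integrable_const B).mono' hf (ae_of_all _ hB)

lemma cont_of_cond {G : Type*} [NormedAddCommGroup G] {f : Ed d → G}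
    (h : ∀ y : Ed d, ∀ ε > (0:ℝ), ∃ δ > (0:ℝ), ∀ y', ‖y' - y‖ < δ → ‖f y' - f y‖ < ε) :
    Continuous f := by
  rw [Metric.continuous_iff]
  intro y ε hε
  obtain ⟨δ, hδ, hδ'⟩ := h y ε hε
  exact ⟨δ, hδ, fun y' hy' => by rw [dist_eq_norm]; exact hδ' y' (by rwa [dist_eq_norm] at hy')⟩

lemma ftc_line {f : Ed d → ℝ} (hdiff : Differentiable ℝ f)
    (hcont : Continuous (fun y => fderiv ℝ f y)) (z v : Ed d) :
    f (z + v) - f z = ∫ t in (0:ℝ)..1, (fderiv ℝ f (z + t • v)) v := by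
  have hderiv : ∀ t ∈ uIcc (0:ℝ) 1,
      HasDerivAt (fun τ => f (z + τ • v)) ((fderiv ℝ f (z + t • v)) v) t := by
    intro t _
    have hpath : HasDerivAt (fun τ : ℝ => z + τ • v) v t := by
      simpa using ((hasDerivAt_id t).smul_const v).const_add z
    have := (hdiff (z + t • v)).hasFDerivAt.comp_hasDerivAt t hpath
    exact this
  have hint : IntervalIntegrable (fun t => (fderiv ℝ f (z + t • v)) v)
      MeasureTheory.volume 0 1 := by
    apply Continuous.intervalIntegrable
    exact (hcont.comp (continuous_const.add (continuous_id.smul continuous_const))).clm_apply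
      continuous_const
  have := intervalIntegral.integral_eq_sub_of_hasDerivAt hderiv hint
  rw [this]
  simp

lemma key_est {f : Ed d → ℝ} (hdiff : Differentiable ℝ f)
    (hcont : Continuous (fun y => fderiv ℝ f y)) (z v : Ed d) (D : Ed d →L[ℝ] ℝ) {C : ℝ}
    (hC : ∀ t ∈ Icc (0:ℝ) 1, ‖fderiv ℝ f (z + t • v) - D‖ ≤ C) :
    |f (z + v) - f z - D v| ≤ C * ‖v‖ := by
  have hint : IntervalIntegrable (fun t => (fderiv ℝ f (z + t • v)) v)
      MeasureTheory.volume 0 1 := by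
    apply Continuous.intervalIntegrable
    exact (hcont.comp (continuous_const.add (continuous_id.smul continuous_const))).clm_apply
      continuous_const
  rw [ftc_line hdiff hcont z v]
  have hDv : D v = ∫ t in (0:ℝ)..1, D v := by simp
  rw [hDv, ← intervalIntegral.integral_sub hint intervalIntegrable_const, ← Real.norm_eq_abs]
  have hb : ∀ t ∈ uIoc (0:ℝ) 1, ‖(fderiv ℝ f (z + t • v)) v - D v‖ ≤ C * ‖v‖ := by
    intro t ht
    have ht' : t ∈ Icc (0:ℝ) 1 := Ioc_subset_Icc_self (by rwa [uIoc_of_le zero_le_one] at ht)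
    calc ‖(fderiv ℝ f (z + t • v)) v - D v‖ = ‖(fderiv ℝ f (z + t • v) - D) v‖ := by
          rw [ContinuousLinearMap.sub_apply]
      _ ≤ ‖fderiv ℝ f (z + t • v) - D‖ * ‖v‖ := ContinuousLinearMap.le_opNorm _ _
      _ ≤ C * ‖v‖ := mul_le_mul_of_nonneg_right (hC t ht') (norm_nonneg _)
  have := intervalIntegral.norm_integral_le_of_norm_le_const hb
  simpa using this

lemma W2_self {μ : Measure (Ed d)} (hμ : IsProbabilityMeasure μ) : W2 μ μ ≤ 0 := by
  have hdiag : Measurable (fun y : Ed d => (y, y)) := measurable_id.prodMk measurable_id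
  refine W2_le_of_coupling (μ.map (fun y => (y, y)))
    (Measure.isProbabilityMeasure_map hdiag.aemeasurable) ⟨?_, ?_⟩ le_rfl ?_
  · rw [Measure.map_map measurable_fst hdiag]
    exact Measure.map_id
  · rw [Measure.map_map measurable_snd hdiag]
    exact Measure.map_id
  · have hfc : Continuous (fun p : Ed d × Ed d => ‖p.1 - p.2‖ ^ 2) :=
      ((continuous_fst.sub continuous_snd).norm).pow 2
    rw [integral_map hdiag.aemeasurable hfc.aestronglyMeasurable]
    simp

lemma contS {F : Measure (Ed d) → Ed d → ℝ}
    (hFc : ∀ μ y, IsP2 μ → ∀ ε > (0:ℝ), ∃ δ > (0:ℝ), ∀ μ' y', IsP2 μ' →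
      W2 μ μ' < δ → ‖y' - y‖ < δ → |F μ' y' - F μ y| < ε)
    {m : Measure (Ed d)} (hm : IsP2 m) (a b : Ed d) (z : Ed d) :
    ContinuousOn (fun s => F (mixM s (m.map (fun w => w + a)) (m.map (fun w => w + b))) z)
      (Icc (0:ℝ) 1) := by
  have hP2 : ∀ s ∈ Icc (0:ℝ) 1,
      IsP2 (mixM s (m.map (fun w => w + a)) (m.map (fun w => w + b))) := fun s hs =>
    isP2_mix (isP2_map hm a) (isP2_map hm b) hs
  rw [Metric.continuousOn_iff]
  intro s hs ε hε
  obtain ⟨δ, hδ, hδ'⟩ := hFc _ z (hP2 s hs) ε hε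
  set C := ‖a - b‖ with hC
  refine ⟨(δ / (C + 1)) ^ 2, by positivity, fun s' hs' hd => ?_⟩
  have hC0 : (0:ℝ) ≤ C := norm_nonneg _
  have hW : W2 (mixM s (m.map (fun w => w + a)) (m.map (fun w => w + b)))
      (mixM s' (m.map (fun w => w + a)) (m.map (fun w => w + b)))
        ≤ Real.sqrt |s' - s| * C := W2_mix_abs hm.1 a b hs hs'
  have h1 : Real.sqrt |s' - s| < δ / (C + 1) := by
    rw [show δ / (C + 1) = Real.sqrt ((δ / (C + 1)) ^ 2) from (Real.sqrt_sq (by positivity)).symm]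
    exact Real.sqrt_lt_sqrt (abs_nonneg _) (by rwa [Real.dist_eq] at hd)
  have h2 : Real.sqrt |s' - s| * C < δ := by
    have := mul_lt_mul'' h1 (lt_add_one C) (Real.sqrt_nonneg _) hC0
    rwa [div_mul_cancel₀ δ (by positivity : C + 1 ≠ 0)] at this
  rw [Real.dist_eq]
  exact hδ' _ z (hP2 s' hs') (lt_of_le_of_lt hW h2) (by simpa using hδ)

set_option maxHeartbeats 2000000
open InnerProductSpace

/-- if `U` is `L-C¹` and `V(x,m) := U((id+x)♯m)`, then for each `m ∈ 𝒫₂`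
the map `x ↦ V(x,m)` is `C¹` with
`D_x V(x,m) = ∫ D_m U((id+x)♯m, x+y) m(dy)`. -/
theorem stmt_14 (d : ℕ) (hd : 1 ≤ d)
    (U : Measure (Ed d) → ℝ) (F : Measure (Ed d) → Ed d → ℝ)
    (hU : IsLC1 U F) (m : Measure (Ed d)) (hm : IsP2 m) :
    (∀ x : Ed d,
      HasGradientAt (fun x' : Ed d => U (Measure.map (fun z => z + x') m))
        (∫ y, gradient (F (Measure.map (fun z => z + x) m)) (x + y) ∂m) x) ∧
    Continuous
      (fun x : Ed d => ∫ y, gradient (F (Measure.map (fun z => z + x) m)) (x + y) ∂m) := by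
  obtain ⟨-, hflat, -, ⟨B₀, hB₀⟩, hFc, hFd, ⟨B₁, hB₁⟩, hDc⟩ := hU
  have hprob : IsProbabilityMeasure m := hm.1
  haveI := hprob
  have hTP2 : ∀ a : Ed d, IsP2 (Measure.map (fun z => z + a) m) := fun a => isP2_map hm a
  have hB₁0 : (0:ℝ) ≤ B₁ := le_trans (norm_nonneg _) (hB₁ m 0 hm)
  have hB₀0 : (0:ℝ) ≤ B₀ := le_trans (abs_nonneg _) (hB₀ m 0 hm)
  have hFcont : ∀ μ, IsP2 μ → Continuous (F μ) := by
    intro μ hμ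
    apply cont_of_cond
    intro y ε hε
    obtain ⟨δ, hδ, hδ'⟩ := hFc μ y hμ ε hε
    refine ⟨δ, hδ, fun y' hy' => ?_⟩
    rw [Real.norm_eq_abs]
    exact hδ' μ y' hμ (lt_of_le_of_lt (W2_self hμ.1) hδ) hy'
  have hDcont : ∀ μ, IsP2 μ → Continuous (fun y => fderiv ℝ (F μ) y) := by
    intro μ hμ
    apply cont_of_cond
    intro y ε hε
    obtain ⟨δ, hδ, hδ'⟩ := hDc μ y hμ ε hε
    exact ⟨δ, hδ, fun y' hy' => hδ' μ y' hμ (lt_of_le_of_lt (W2_self hμ.1) hδ) hy'⟩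
  have hgrad : ∀ (f : Ed d → ℝ) (z : Ed d),
      gradient f z = (toDual ℝ (Ed d)).symm (fderiv ℝ f z) := fun _ _ => rfl
  have hgdiff : ∀ (f₁ f₂ : Ed d → ℝ) (z₁ z₂ : Ed d),
      ‖gradient f₁ z₁ - gradient f₂ z₂‖ = ‖fderiv ℝ f₁ z₁ - fderiv ℝ f₂ z₂‖ := by
    intro f₁ f₂ z₁ z₂
    rw [hgrad, hgrad, ← map_sub]
    exact LinearIsometryEquiv.norm_map _ _
  have hgnorm : ∀ (μ : Measure (Ed d)), IsP2 μ → ∀ z : Ed d, ‖gradient (F μ) z‖ ≤ B₁ := by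
    intro μ hμ z
    rw [hgrad, LinearIsometryEquiv.norm_map]
    exact hB₁ μ z hμ
  have hgcont : ∀ μ, IsP2 μ → Continuous (fun z => gradient (F μ) z) := by
    intro μ hμ
    simp only [hgrad]
    exact (LinearIsometryEquiv.continuous _).comp (hDcont μ hμ)
  have hFint : ∀ (μ' : Measure (Ed d)), IsP2 μ' → ∀ c : Ed d,
      Integrable (fun y => F μ' (y + c)) m := fun μ' hμ' c =>
    integrable_bdd (((hFcont μ' hμ').comp
      (continuous_id.add continuous_const)).aestronglyMeasurable)
      (fun y => by rw [Real.norm_eq_abs]; exact hB₀ μ' _ hμ')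
  constructor
  · intro x
    set ν : Measure (Ed d) := Measure.map (fun z => z + x) m with hν
    have hνP2 : IsP2 ν := hTP2 x
    rw [hasGradientAt_iff_hasFDerivAt, hasFDerivAt_iff_tendsto]
    set g : Ed d := ∫ y, gradient (F ν) (x + y) ∂m with hg
    have hgint : Integrable (fun y => gradient (F ν) (x + y)) m :=
      integrable_bdd (((hgcont _ hνP2).comp
        (continuous_const.add continuous_id)).aestronglyMeasurable)
        (fun y => hgnorm _ hνP2 _)
    have hDint : ∀ w : Ed d, Integrable (fun y => (fderiv ℝ (F ν) (x + y)) w) m := by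
      intro w
      refine integrable_bdd ((((hDcont ν hνP2).comp
        (continuous_const.add continuous_id)).clm_apply continuous_const).aestronglyMeasurable)
        (fun y => ?_) (B := B₁ * ‖w‖)
      calc ‖(fderiv ℝ (F ν) (x + y)) w‖ ≤ ‖fderiv ℝ (F ν) (x + y)‖ * ‖w‖ :=
            ContinuousLinearMap.le_opNorm _ _
        _ ≤ B₁ * ‖w‖ := mul_le_mul_of_nonneg_right (hB₁ ν _ hνP2) (norm_nonneg _)
    have hLv : ∀ w : Ed d, (toDual ℝ (Ed d)) g w = ∫ y, (fderiv ℝ (F ν) (x + y)) w ∂m := by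
      intro w
      rw [toDual_apply_apply, real_inner_comm, hg, ← integral_inner hgint w]
      refine integral_congr_ae (Filter.Eventually.of_forall fun y => ?_)
      show ⟪w, gradient (F ν) (x + y)⟫_ℝ = (fderiv ℝ (F ν) (x + y)) w
      rw [real_inner_comm, hgrad]
      exact toDual_symm_apply
    set μs : Ed d → ℝ → Measure (Ed d) :=
      fun x' s => mixM s ν (Measure.map (fun z => z + x') m) with hμs
    have hμsP2 : ∀ x' s, s ∈ Icc (0:ℝ) 1 → IsP2 (μs x' s) :=
      fun x' s hs => isP2_mix hνP2 (hTP2 x') hs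
    set A : Ed d → ℝ → ℝ :=
      fun x' s => ∫ y, (F (μs x' s) (y + x') - F (μs x' s) (y + x)) ∂m with hA
    set r : Ed d → ℝ → Ed d → ℝ := fun x' s y => ‖x' - x‖⁻¹ *
      |F (μs x' s) (y + x') - F (μs x' s) (y + x) - (fderiv ℝ (F ν) (x + y)) (x' - x)|
      with hr
    have hrnn : ∀ x' s y, 0 ≤ r x' s y :=
      fun x' s y => mul_nonneg (inv_nonneg.2 (norm_nonneg _)) (abs_nonneg _)
    have hScont : ∀ (x' z : Ed d), ContinuousOn (fun s => F (μs x' s) z) (Icc (0:ℝ) 1) := by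
      intro x' z
      have := contS hFc hm x x' z
      rw [← hν] at this
      exact this
    have hW2mix : ∀ x' s, s ∈ Icc (0:ℝ) 1 → W2 ν (μs x' s) ≤ ‖x' - x‖ := by
      intro x' s hs
      have := W2_trans_mix_le hprob x x' hs
      rw [← hν, norm_sub_rev] at this
      exact this
    have hrcont : ∀ x' s, s ∈ Icc (0:ℝ) 1 → Continuous (fun y => r x' s y) := by
      intro x' s hs
      apply continuous_const.mul
      apply Continuous.abs
      exact (((hFcont _ (hμsP2 x' s hs)).comp (continuous_id.add continuous_const)).sub
        ((hFcont _ (hμsP2 x' s hs)).comp (continuous_id.add continuous_const))).sub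
        ((((hDcont ν hνP2).comp (continuous_const.add continuous_id)).clm_apply
          continuous_const))
    have hrbound : ∀ x' s, s ∈ Icc (0:ℝ) 1 → ∀ y, r x' s y ≤ 2 * B₁ := by
      intro x' s hs y
      rcases eq_or_ne x' x with rfl | hne
      · simp only [hr, sub_self, norm_zero, inv_zero, zero_mul]
        linarith
      · have hv : ‖x' - x‖ ≠ 0 := by simpa [sub_eq_zero] using hne
        have hkey := key_est (hFd _ (hμsP2 x' s hs)) (hDcont _ (hμsP2 x' s hs)) (y + x)
          (x' - x) (fderiv ℝ (F ν) (x + y)) (C := 2 * B₁) ?_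
        · have hzv : y + x + (x' - x) = y + x' := by abel
          rw [hzv] at hkey
          calc r x' s y ≤ ‖x' - x‖⁻¹ * (2 * B₁ * ‖x' - x‖) :=
                mul_le_mul_of_nonneg_left hkey (inv_nonneg.2 (norm_nonneg _))
            _ = 2 * B₁ := by field_simp
        · intro t _
          calc ‖fderiv ℝ (F (μs x' s)) (y + x + t • (x' - x)) - fderiv ℝ (F ν) (x + y)‖
              ≤ ‖fderiv ℝ (F (μs x' s)) (y + x + t • (x' - x))‖ + ‖fderiv ℝ (F ν) (x + y)‖ :=
                norm_sub_le _ _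
            _ ≤ B₁ + B₁ := add_le_add (hB₁ _ _ (hμsP2 x' s hs)) (hB₁ _ _ hνP2)
            _ = 2 * B₁ := by ring
    have hrint : ∀ x' s, s ∈ Icc (0:ℝ) 1 → Integrable (fun y => r x' s y) m := by
      intro x' s hs
      exact integrable_bdd (hrcont x' s hs).aestronglyMeasurable
        (fun y => by rw [Real.norm_eq_abs, abs_of_nonneg (hrnn x' s y)]
                     exact hrbound x' s hs y)
    have hrtend : ∀ s, s ∈ Icc (0:ℝ) 1 → ∀ y : Ed d,
        Filter.Tendsto (fun x' => r x' s y) (nhds x) (nhds 0) := by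
      intro s hs y
      rw [Metric.tendsto_nhds]
      intro ε hε
      obtain ⟨δ, hδ, hδ'⟩ := hDc ν (x + y) hνP2 (ε / 2) (by positivity)
      rw [Metric.eventually_nhds_iff]
      refine ⟨δ, hδ, fun x' hx' => ?_⟩
      rw [Real.dist_eq, sub_zero, abs_of_nonneg (hrnn x' s y)]
      rcases eq_or_ne x' x with rfl | hne
      · simp only [hr, sub_self, norm_zero, inv_zero, zero_mul]
        exact hε
      · have hv : ‖x' - x‖ ≠ 0 := by simpa [sub_eq_zero] using hne
        have hvlt : ‖x' - x‖ < δ := by rwa [dist_eq_norm] at hx'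
        have hkey := key_est (hFd _ (hμsP2 x' s hs)) (hDcont _ (hμsP2 x' s hs)) (y + x)
          (x' - x) (fderiv ℝ (F ν) (x + y)) (C := ε / 2) ?_
        · have hzv : y + x + (x' - x) = y + x' := by abel
          rw [hzv] at hkey
          calc r x' s y ≤ ‖x' - x‖⁻¹ * (ε / 2 * ‖x' - x‖) :=
                mul_le_mul_of_nonneg_left hkey (inv_nonneg.2 (norm_nonneg _))
            _ = ε / 2 := by field_simp
            _ < ε := by linarith
        · intro t ht
          apply le_of_lt
          apply hδ' (μs x' s) (y + x + t • (x' - x)) (hμsP2 x' s hs)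
            (lt_of_le_of_lt (hW2mix x' s hs) hvlt)
          have he : y + x + t • (x' - x) - (x + y) = t • (x' - x) := by abel
          rw [he, norm_smul, Real.norm_eq_abs, abs_of_nonneg ht.1]
          calc t * ‖x' - x‖ ≤ 1 * ‖x' - x‖ :=
                mul_le_mul_of_nonneg_right ht.2 (norm_nonneg _)
            _ = ‖x' - x‖ := one_mul _
            _ < δ := hvlt
    have hinner : ∀ s, s ∈ Icc (0:ℝ) 1 →
        Filter.Tendsto (fun x' => ∫ y, r x' s y ∂m) (nhds x) (nhds 0) := by
      intro s hs
      have := tendsto_integral_filter_of_dominated_convergence (μ := m)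
        (F := fun x' y => r x' s y) (f := fun _ => (0:ℝ)) (bound := fun _ => 2 * B₁)
        (l := nhds x)
        (Filter.Eventually.of_forall fun x' => (hrcont x' s hs).aestronglyMeasurable)
        (Filter.Eventually.of_forall fun x' => ae_of_all _ fun y => by
          rw [Real.norm_eq_abs, abs_of_nonneg (hrnn x' s y)]
          exact hrbound x' s hs y)
        (integrable_const _)
        (ae_of_all _ fun y => hrtend s hs y)
      simpa using this
    have hIcont : ∀ x', ContinuousOn (fun s => ∫ y, r x' s y ∂m) (Icc (0:ℝ) 1) := by
      intro x'
      apply continuousOn_of_dominated (bound := fun _ => 2 * B₁)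
      · intro s hs
        exact (hrcont x' s hs).aestronglyMeasurable
      · intro s hs
        exact ae_of_all _ fun y => by
          rw [Real.norm_eq_abs, abs_of_nonneg (hrnn x' s y)]
          exact hrbound x' s hs y
      · exact integrable_const _
      · refine ae_of_all _ fun y => ?_
        exact continuousOn_const.mul
          ((((hScont x' (y + x')).sub (hScont x' (y + x))).sub continuousOn_const).abs)
    have hAcont : ∀ x', ContinuousOn (A x') (Icc (0:ℝ) 1) := by
      intro x'
      apply continuousOn_of_dominated (bound := fun _ => 2 * B₀)
      · intro s hs
        exact (((hFcont _ (hμsP2 x' s hs)).comp (continuous_id.add continuous_const)).sub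
          ((hFcont _ (hμsP2 x' s hs)).comp
            (continuous_id.add continuous_const))).aestronglyMeasurable
      · intro s hs
        refine ae_of_all _ fun y => ?_
        rw [Real.norm_eq_abs]
        have h1 := hB₀ _ (y + x') (hμsP2 x' s hs)
        have h2 := hB₀ _ (y + x) (hμsP2 x' s hs)
        calc |F (μs x' s) (y + x') - F (μs x' s) (y + x)|
            ≤ |F (μs x' s) (y + x')| + |F (μs x' s) (y + x)| := abs_sub _ _
          _ ≤ 2 * B₀ := by linarith
      · exact integrable_const _
      · exact ae_of_all _ fun y => (hScont x' (y + x')).sub (hScont x' (y + x))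
    have hident : ∀ x' : Ed d, U (Measure.map (fun z => z + x') m) - U ν
        - (toDual ℝ (Ed d)) g (x' - x)
        = ∫ s in (0:ℝ)..1, (A x' s - (toDual ℝ (Ed d)) g (x' - x)) := by
      intro x'
      have h2 := hflat ν (Measure.map (fun z => z + x') m) hνP2 (hTP2 x')
      have hcongr : EqOn
          (fun s => (∫ y, F (mixM s ν (Measure.map (fun z => z + x') m)) y
              ∂(Measure.map (fun z => z + x') m))
            - ∫ y, F (mixM s ν (Measure.map (fun z => z + x') m)) y ∂ν) (A x')
          (uIcc (0:ℝ) 1) := by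
        intro s hs
        rw [uIcc_of_le zero_le_one] at hs
        simp only
        rw [integral_map (meas_trans x').aemeasurable
            (hFcont _ (hμsP2 x' s hs)).aestronglyMeasurable, hν,
          integral_map (meas_trans x).aemeasurable
            (hFcont _ (hμsP2 x' s hs)).aestronglyMeasurable]
        simp only [hA]
        exact (integral_sub (hFint _ (hμsP2 x' s hs) x') (hFint _ (hμsP2 x' s hs) x)).symm
      rw [h2, intervalIntegral.integral_congr hcongr]
      have hAint : IntervalIntegrable (A x') MeasureTheory.volume 0 1 := by
        apply ContinuousOn.intervalIntegrable
        rw [uIcc_of_le zero_le_one]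
        exact hAcont x'
      rw [intervalIntegral.integral_sub hAint intervalIntegrable_const,
        intervalIntegral.integral_const]
      simp
    have hbound1 : ∀ x' s, s ∈ Icc (0:ℝ) 1 →
        ‖x' - x‖⁻¹ * ‖A x' s - (toDual ℝ (Ed d)) g (x' - x)‖ ≤ ∫ y, r x' s y ∂m := by
      intro x' s hs
      have hAc : A x' s - (toDual ℝ (Ed d)) g (x' - x)
          = ∫ y, (F (μs x' s) (y + x') - F (μs x' s) (y + x)
            - (fderiv ℝ (F ν) (x + y)) (x' - x)) ∂m := by
        rw [hLv (x' - x)]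
        exact (integral_sub ((hFint _ (hμsP2 x' s hs) x').sub (hFint _ (hμsP2 x' s hs) x))
          (hDint (x' - x))).symm
      rw [hAc]
      have e1 : ‖x' - x‖⁻¹ * ‖∫ y, (F (μs x' s) (y + x') - F (μs x' s) (y + x)
          - (fderiv ℝ (F ν) (x + y)) (x' - x)) ∂m‖
          = ‖∫ y, ‖x' - x‖⁻¹ * (F (μs x' s) (y + x') - F (μs x' s) (y + x)
            - (fderiv ℝ (F ν) (x + y)) (x' - x)) ∂m‖ := by
        rw [integral_const_mul, Real.norm_eq_abs, Real.norm_eq_abs, abs_mul,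
          abs_of_nonneg (inv_nonneg.2 (norm_nonneg _))]
      rw [e1]
      refine le_trans (norm_integral_le_integral_norm _) (le_of_eq (integral_congr_ae
        (Filter.Eventually.of_forall fun y => ?_)))
      simp only [hr]
      rw [Real.norm_eq_abs, abs_mul, abs_of_nonneg (inv_nonneg.2 (norm_nonneg _))]
    have hRtend : Filter.Tendsto (fun x' => ∫ s in (0:ℝ)..1, (∫ y, r x' s y ∂m))
        (nhds x) (nhds 0) := by
      have := intervalIntegral.tendsto_integral_filter_of_dominated_convergence
        (μ := MeasureTheory.volume) (a := 0) (b := 1)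
        (F := fun x' s => ∫ y, r x' s y ∂m) (f := fun _ => (0:ℝ)) (bound := fun _ => 2 * B₁)
        (l := nhds x)
        (Filter.Eventually.of_forall fun x' =>
          ((hIcont x').aestronglyMeasurable measurableSet_Icc).mono_measure
            (Measure.restrict_mono
              (by rw [uIoc_of_le (zero_le_one (α := ℝ))]; exact Ioc_subset_Icc_self) le_rfl))
        (Filter.Eventually.of_forall fun x' => ae_of_all _ fun s hsΙ => by
          have hs : s ∈ Icc (0:ℝ) 1 :=
            Ioc_subset_Icc_self (by rwa [uIoc_of_le (zero_le_one (α := ℝ))] at hsΙ)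
          rw [Real.norm_eq_abs, abs_of_nonneg (integral_nonneg (hrnn x' s))]
          calc (∫ y, r x' s y ∂m) ≤ ∫ _, 2 * B₁ ∂m :=
                integral_mono (hrint x' s hs) (integrable_const _) (hrbound x' s hs)
            _ = 2 * B₁ := by simp)
        intervalIntegrable_const
        (ae_of_all _ fun s hsΙ => hinner s
          (Ioc_subset_Icc_self (by rwa [uIoc_of_le (zero_le_one (α := ℝ))] at hsΙ)))
      simpa using this
    apply squeeze_zero (g := fun x' => ∫ s in (0:ℝ)..1, (∫ y, r x' s y ∂m))
    · intro x'
      exact mul_nonneg (inv_nonneg.2 (norm_nonneg _)) (norm_nonneg _)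
    · intro x'
      rw [hident x']
      have hAint : IntervalIntegrable (A x') MeasureTheory.volume 0 1 := by
        apply ContinuousOn.intervalIntegrable
        rw [uIcc_of_le zero_le_one]
        exact hAcont x'
      have hint1 : IntervalIntegrable
          (fun s => ‖x' - x‖⁻¹ * ‖A x' s - (toDual ℝ (Ed d)) g (x' - x)‖)
          MeasureTheory.volume 0 1 := by
        apply ContinuousOn.intervalIntegrable
        rw [uIcc_of_le zero_le_one]
        exact continuousOn_const.mul (((hAcont x').sub continuousOn_const).norm)
      have hint2 : IntervalIntegrable (fun s => ∫ y, r x' s y ∂m)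
          MeasureTheory.volume 0 1 := by
        apply ContinuousOn.intervalIntegrable
        rw [uIcc_of_le zero_le_one]
        exact hIcont x'
      calc ‖x' - x‖⁻¹ * ‖∫ s in (0:ℝ)..1, (A x' s - (toDual ℝ (Ed d)) g (x' - x))‖
          ≤ ‖x' - x‖⁻¹ * ∫ s in (0:ℝ)..1, ‖A x' s - (toDual ℝ (Ed d)) g (x' - x)‖ :=
            mul_le_mul_of_nonneg_left
              (intervalIntegral.norm_integral_le_integral_norm zero_le_one)
              (inv_nonneg.2 (norm_nonneg _))
        _ = ∫ s in (0:ℝ)..1, ‖x' - x‖⁻¹ * ‖A x' s - (toDual ℝ (Ed d)) g (x' - x)‖ := by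
            rw [← intervalIntegral.integral_const_mul]
        _ ≤ ∫ s in (0:ℝ)..1, (∫ y, r x' s y ∂m) :=
            intervalIntegral.integral_mono_on zero_le_one hint1 hint2
              (fun s hs => hbound1 x' s hs)
    · exact hRtend
  · rw [continuous_iff_continuousAt]
    intro x
    apply continuousAt_of_dominated (bound := fun _ => B₁)
    · exact Filter.Eventually.of_forall fun x' => ((hgcont _ (hTP2 x')).comp
        (continuous_const.add continuous_id)).aestronglyMeasurable
    · exact Filter.Eventually.of_forall fun x' => ae_of_all _ fun y => hgnorm _ (hTP2 x') _
    · exact integrable_const _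
    · refine ae_of_all _ fun y => ?_
      rw [Metric.continuousAt_iff]
      intro ε hε
      obtain ⟨δ, hδ, hδ'⟩ := hDc (Measure.map (fun z => z + x) m) (x + y) (hTP2 x) ε hε
      refine ⟨δ, hδ, fun x' hx' => ?_⟩
      rw [dist_eq_norm, hgdiff]
      apply hδ' _ _ (hTP2 x')
      · refine lt_of_le_of_lt (W2_trans_le hprob x x') ?_
        rwa [norm_sub_rev, ← dist_eq_norm]
      · have he : x' + y - (x + y) = x' - x := by abel
        rw [he, ← dist_eq_norm]
        exact hx'

end
end
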